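/- Let c ≥ 0 and suppose Φ assigns a real number to every 1-Lipschitz function w : C → ℝ such that: (1) for every 1-Lipschitz w : C → ℝ and every request r ∈ M, Φ(T_r(w)) − Φ(w) ≥ ∇(w, r); and (2) there is a constant A with Φ(w) ≤ (c + 1)·(min over X ∈ C of w(X)) + A for every 1-Lipschitz w. Then the Work Function Algorithm is c-competitive: there exists a constant B such that for every initial configuration X_0 ∈ C, every request sequence ρ, and every WFA trajectory for ρ, WFA(ρ) ≤ c·OPT(ρ) + B. -/

import Mathlib

open scoped BigOperators

/-- A configuration: a multiset of `k` points of `M`. -/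
abbrev Conf (M : Type*) (k : ℕ) := Sym M k

/-- Minimum matching cost between two configurations: the minimum over enumerations
of the two multisets of the sum of pointwise distances. -/
noncomputable def confDist {M : Type*} [MetricSpace M] {k : ℕ} (X Y : Conf M k) : ℝ :=
  sInf { c : ℝ | ∃ u v : Fin k → M,
    ((List.ofFn u : List M) : Multiset M) = (X : Multiset M) ∧
    ((List.ofFn v : List M) : Multiset M) = (Y : Multiset M) ∧
    c = ∑ i, dist (u i) (v i) }

/-- The work-function update operator `T_r`. -/
noncomputable def wfUpdate {M : Type*} [MetricSpace M] {k : ℕ}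
    (w : Conf M k → ℝ) (r : M) (X : Conf M k) : ℝ :=
  sInf { c : ℝ | ∃ Y : Conf M k, r ∈ Y ∧ c = w Y + confDist X Y }

/-- The extended cost `∇(w, r)`. -/
noncomputable def extCost {M : Type*} [MetricSpace M] {k : ℕ}
    (w : Conf M k → ℝ) (r : M) : ℝ :=
  sSup { c : ℝ | ∃ X : Conf M k, c = wfUpdate w r X - w X }

/-- The OPT increase `ΔOPT(w, r)`. -/
noncomputable def optIncrease {M : Type*} [MetricSpace M] {k : ℕ}
    (w : Conf M k → ℝ) (r : M) : ℝ :=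
  sInf (Set.range (wfUpdate w r)) - sInf (Set.range w)

/-- The normalized work function `ŵ = w - (min w)·1`. -/
noncomputable def normWF {M : Type*} [MetricSpace M] {k : ℕ}
    (w : Conf M k → ℝ) : Conf M k → ℝ :=
  fun X => w X - sInf (Set.range w)

/-- `w` is 1-Lipschitz with respect to the matching distance on configurations. -/
def LipschitzWF {M : Type*} [MetricSpace M] {k : ℕ} (w : Conf M k → ℝ) : Prop :=
  ∀ X Y : Conf M k, |w X - w Y| ≤ confDist X Y

/-- The initial work function `w₀(X) = d(X₀, X)` for initial configuration `X₀`. -/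
noncomputable def initWF {M : Type*} [MetricSpace M] {k : ℕ} (X₀ : Conf M k) :
    Conf M k → ℝ :=
  fun X => confDist X₀ X

/-- The work function `w_i` after serving the first `i` requests of the sequence `ρ`,
starting from `w₀ = d(X₀, ·)`. -/
noncomputable def wfAt {M : Type*} [MetricSpace M] {k : ℕ} (X₀ : Conf M k)
    (ρ : List M) (i : ℕ) : Conf M k → ℝ :=
  (ρ.take i).foldl (fun w r => wfUpdate w r) (initWF X₀)

/-- `Xs` is a trajectory of the Work Function Algorithm for the request sequence `ρ`
started at `X₀`: `Xs 0 = X₀` and, for each `i < |ρ|`, the configuration `Xs (i+1)`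
contains the request `ρ.get i` and minimizes `w_{i+1}(Y) + d(X_i, Y)` over all
configurations `Y` containing the request. -/
def IsWFATrajectory {M : Type*} [MetricSpace M] {k : ℕ} (X₀ : Conf M k) (ρ : List M)
    (Xs : ℕ → Conf M k) : Prop :=
  Xs 0 = X₀ ∧
  ∀ i : Fin ρ.length,
    ρ.get i ∈ Xs (↑i + 1) ∧
    wfAt X₀ ρ (↑i + 1) (Xs (↑i + 1)) + confDist (Xs ↑i) (Xs (↑i + 1)) =
      sInf { c : ℝ | ∃ Y : Conf M k, ρ.get i ∈ Y ∧
        c = wfAt X₀ ρ (↑i + 1) Y + confDist (Xs ↑i) Y }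

/-- The online cost of the trajectory `Xs` on `ρ`: `WFA(ρ) = Σ_{i<t} d(X_i, X_{i+1})`. -/
noncomputable def WFACost {M : Type*} [MetricSpace M] {k : ℕ} (ρ : List M)
    (Xs : ℕ → Conf M k) : ℝ :=
  ∑ i : Fin ρ.length, confDist (Xs ↑i) (Xs (↑i + 1))

/-- The offline optimum `OPT(ρ) = min_X w_t(X)`. -/
noncomputable def OPTCost {M : Type*} [MetricSpace M] {k : ℕ} (X₀ : Conf M k)
    (ρ : List M) : ℝ :=
  sInf (Set.range (wfAt X₀ ρ ρ.length))

section Aux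

open List in
lemma exists_perm_comp {α : Type*} : ∀ {k : ℕ} (v v' : Fin k → α),
    ((List.ofFn v : List α) : Multiset α) = ((List.ofFn v' : List α) : Multiset α) →
    ∃ σ : Equiv.Perm (Fin k), v = v' ∘ σ := by
  intro k
  induction k with
  | zero => exact fun v v' _ => ⟨Equiv.refl _, funext fun i => i.elim0⟩
  | succ n ih =>
    intro v v' h
    have h0 : v 0 ∈ List.ofFn v' := by
      rw [← Multiset.mem_coe, ← h, Multiset.mem_coe]
      exact List.mem_ofFn.mpr ⟨0, rfl⟩
    obtain ⟨j, hj⟩ := List.mem_ofFn.mp h0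
    set v'' : Fin (n+1) → α := v' ∘ (Equiv.swap 0 j) with hv''
    have hms : ((List.ofFn v'' : List α) : Multiset α) = ((List.ofFn v' : List α) : Multiset α) :=
      Multiset.coe_eq_coe.mpr (Equiv.Perm.ofFn_comp_perm _ _)
    have hdec : ∀ f : Fin (n+1) → α,
        ((List.ofFn f : List α) : Multiset α) = f 0 ::ₘ ((List.ofFn (f ∘ Fin.succ) : List α) : Multiset α) := by
      intro f
      rw [List.ofFn_succ]
      rfl
    have hv0 : v'' 0 = v 0 := by simp [hv'', hj]
    have htail : ((List.ofFn (v ∘ Fin.succ) : List α) : Multiset α)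
        = ((List.ofFn (v'' ∘ Fin.succ) : List α) : Multiset α) := by
      have := h.trans hms.symm
      rw [hdec v, hdec v'', hv0] at this
      exact (Multiset.cons_inj_right _).mp this
    obtain ⟨τ, hτ⟩ := ih (v ∘ Fin.succ) (v'' ∘ Fin.succ) htail
    refine ⟨Equiv.Perm.decomposeFin.symm (j, τ), funext fun i => ?_⟩
    refine Fin.cases ?_ (fun i => ?_) i
    · simp [hj]
    · have := congrFun hτ i
      simp only [Function.comp_apply] at this ⊢
      rw [Equiv.Perm.decomposeFin_symm_apply_succ]
      exact this

variable {M : Type*} [MetricSpace M] {k : ℕ}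

lemma exists_ofFn (X : Conf M k) :
    ∃ u : Fin k → M, ((List.ofFn u : List M) : Multiset M) = (X : Multiset M) := by
  obtain ⟨s, hs⟩ := X
  have hlen : s.toList.length = k := by rw [Multiset.length_toList, hs]
  refine ⟨fun i => s.toList.get (Fin.cast hlen.symm i), ?_⟩
  have : List.ofFn (fun i => s.toList.get (Fin.cast hlen.symm i)) = s.toList := by
    apply List.ext_get (by simp [hlen])
    intro i h1 h2
    simp
  rw [this]
  simp [Sym.coe_mk]

def matchSet (X Y : Conf M k) : Set ℝ :=
  { c : ℝ | ∃ u v : Fin k → M,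
    ((List.ofFn u : List M) : Multiset M) = (X : Multiset M) ∧
    ((List.ofFn v : List M) : Multiset M) = (Y : Multiset M) ∧
    c = ∑ i, dist (u i) (v i) }

lemma confDist_eq (X Y : Conf M k) : confDist X Y = sInf (matchSet X Y) := rfl

lemma matchSet_nonempty (X Y : Conf M k) : (matchSet X Y).Nonempty := by
  obtain ⟨u, hu⟩ := exists_ofFn X
  obtain ⟨v, hv⟩ := exists_ofFn Y
  exact ⟨_, u, v, hu, hv, rfl⟩

lemma matchSet_finite [Finite M] (X Y : Conf M k) : (matchSet X Y).Finite := by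
  have hsub : matchSet X Y ⊆ Set.range
      (fun p : (Fin k → M) × (Fin k → M) => ∑ i, dist (p.1 i) (p.2 i)) := by
    rintro c ⟨u, v, -, -, rfl⟩
    exact ⟨(u, v), rfl⟩
  exact (Set.finite_range _).subset hsub

variable [Finite M]

lemma confDist_mem (X Y : Conf M k) : confDist X Y ∈ matchSet X Y :=
  (matchSet_nonempty X Y).csInf_mem (matchSet_finite X Y)

lemma confDist_le {X Y : Conf M k} {c : ℝ} (hc : c ∈ matchSet X Y) : confDist X Y ≤ c :=
  csInf_le (matchSet_finite X Y).bddBelow hc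

lemma confDist_nonneg (X Y : Conf M k) : 0 ≤ confDist X Y := by
  obtain ⟨u, v, -, -, hc⟩ := confDist_mem X Y
  rw [hc]
  exact Finset.sum_nonneg fun i _ => dist_nonneg

lemma confDist_self (X : Conf M k) : confDist X X = 0 := by
  refine le_antisymm ?_ (confDist_nonneg X X)
  obtain ⟨u, hu⟩ := exists_ofFn X
  have : (0:ℝ) ∈ matchSet X X := ⟨u, u, hu, hu, by simp⟩
  exact confDist_le this

lemma confDist_symm (X Y : Conf M k) : confDist X Y = confDist Y X := by
  have key : ∀ A B : Conf M k, confDist A B ≤ confDist B A := by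
    intro A B
    obtain ⟨u, v, hu, hv, hc⟩ := confDist_mem B A
    refine (confDist_le ⟨v, u, hv, hu, ?_⟩).trans_eq hc.symm
    simp [dist_comm]
  exact le_antisymm (key X Y) (key Y X)

lemma confDist_triangle (X Y Z : Conf M k) :
    confDist X Z ≤ confDist X Y + confDist Y Z := by
  obtain ⟨u, v, hu, hv, hc1⟩ := confDist_mem X Y
  obtain ⟨v', w, hv', hw, hc2⟩ := confDist_mem Y Z
  obtain ⟨σ, hσ⟩ := exists_perm_comp v v' (hv.trans hv'.symm)
  have hmem : (∑ i, dist (u i) (w (σ i))) ∈ matchSet X Z := by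
    refine ⟨u, w ∘ σ, hu, ?_, rfl⟩
    rw [← hw]
    exact Multiset.coe_eq_coe.mpr (Equiv.Perm.ofFn_comp_perm σ w)
  refine (confDist_le hmem).trans ?_
  rw [hc1, hc2]
  calc ∑ i, dist (u i) (w (σ i))
      ≤ ∑ i, (dist (u i) (v i) + dist (v' (σ i)) (w (σ i))) := by
        refine Finset.sum_le_sum fun i _ => ?_
        have hvi : v i = v' (σ i) := congrFun hσ i
        calc dist (u i) (w (σ i)) ≤ dist (u i) (v i) + dist (v i) (w (σ i)) :=
              dist_triangle _ _ _
          _ = dist (u i) (v i) + dist (v' (σ i)) (w (σ i)) := by rw [hvi]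
    _ = (∑ i, dist (u i) (v i)) + ∑ i, dist (v' (σ i)) (w (σ i)) :=
        Finset.sum_add_distrib
    _ = (∑ i, dist (u i) (v i)) + ∑ i, dist (v' i) (w i) := by
        rw [Equiv.sum_comp σ (fun i => dist (v' i) (w i))]

def updSet (w : Conf M k → ℝ) (r : M) (X : Conf M k) : Set ℝ :=
  { c : ℝ | ∃ Y : Conf M k, r ∈ Y ∧ c = w Y + confDist X Y }

lemma wfUpdate_eq (w : Conf M k → ℝ) (r : M) (X : Conf M k) :
    wfUpdate w r X = sInf (updSet w r X) := rfl

lemma updSet_nonempty (hk : 0 < k) (w : Conf M k → ℝ) (r : M) (X : Conf M k) :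
    (updSet w r X).Nonempty :=
  ⟨_, Sym.replicate k r, Sym.mem_replicate.mpr ⟨hk.ne', rfl⟩, rfl⟩

lemma updSet_finite (w : Conf M k → ℝ) (r : M) (X : Conf M k) :
    (updSet w r X).Finite := by
  have hsub : updSet w r X ⊆ Set.range (fun Y : Conf M k => w Y + confDist X Y) := by
    rintro c ⟨Y, -, rfl⟩; exact ⟨Y, rfl⟩
  exact (Set.finite_range _).subset hsub

lemma wfUpdate_le {w : Conf M k → ℝ} {r : M} {X Y : Conf M k} (hY : r ∈ Y) :
    wfUpdate w r X ≤ w Y + confDist X Y :=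
  csInf_le (updSet_finite w r X).bddBelow ⟨Y, hY, rfl⟩

lemma wfUpdate_mem (hk : 0 < k) (w : Conf M k → ℝ) (r : M) (X : Conf M k) :
    ∃ Y : Conf M k, r ∈ Y ∧ wfUpdate w r X = w Y + confDist X Y :=
  (updSet_nonempty hk w r X).csInf_mem (updSet_finite w r X)

lemma le_wfUpdate (hk : 0 < k) {w : Conf M k → ℝ} (hw : LipschitzWF w) (r : M) (X : Conf M k) :
    w X ≤ wfUpdate w r X := by
  rw [wfUpdate_eq]
  refine le_csInf (updSet_nonempty hk w r X) ?_
  rintro c ⟨Y, -, rfl⟩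
  have := abs_le.mp (hw X Y)
  linarith [this.2]

lemma wfUpdate_lipschitz (hk : 0 < k) {w : Conf M k → ℝ} (hw : LipschitzWF w) (r : M) :
    LipschitzWF (wfUpdate w r) := by
  have key : ∀ X X' : Conf M k, wfUpdate w r X ≤ wfUpdate w r X' + confDist X X' := by
    intro X X'
    obtain ⟨Y', hY', hEq⟩ := wfUpdate_mem hk w r X'
    have h3 : confDist X Y' ≤ confDist X X' + confDist X' Y' := confDist_triangle _ _ _
    have h4 : wfUpdate w r X ≤ w Y' + confDist X Y' := wfUpdate_le hY'
    linarith
  intro X Y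
  rw [abs_sub_le_iff]
  constructor
  · linarith [key X Y]
  · have := key Y X
    rw [confDist_symm Y X] at this
    linarith

lemma initWF_lipschitz (X₀ : Conf M k) : LipschitzWF (initWF X₀) := by
  intro X Y
  rw [abs_sub_le_iff]
  constructor
  · have h1 := confDist_triangle X₀ Y X
    rw [confDist_symm Y X] at h1
    simp only [initWF]
    linarith
  · have h1 := confDist_triangle X₀ X Y
    simp only [initWF]
    linarith

lemma foldl_lipschitz (hk : 0 < k) (l : List M) :
    ∀ w : Conf M k → ℝ, LipschitzWF w →
      LipschitzWF (l.foldl (fun w r => wfUpdate w r) w) := by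
  induction l with
  | nil => exact fun w hw => hw
  | cons r l ih => exact fun w hw => ih _ (wfUpdate_lipschitz hk hw r)

lemma wfAt_lipschitz (hk : 0 < k) (X₀ : Conf M k) (ρ : List M) (i : ℕ) :
    LipschitzWF (wfAt X₀ ρ i) :=
  foldl_lipschitz hk _ _ (initWF_lipschitz X₀)

lemma wfAt_succ (X₀ : Conf M k) (ρ : List M) {i : ℕ} (h : i < ρ.length) :
    wfAt X₀ ρ (i + 1) = wfUpdate (wfAt X₀ ρ i) (ρ.get ⟨i, h⟩) := by
  unfold wfAt
  rw [List.take_succ, List.getElem?_eq_getElem h, List.foldl_append]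
  rfl

lemma le_extCost (w : Conf M k → ℝ) (r : M) (X : Conf M k) :
    wfUpdate w r X - w X ≤ extCost w r := by
  refine le_csSup ?_ ⟨X, rfl⟩
  have hsub : {c : ℝ | ∃ X : Conf M k, c = wfUpdate w r X - w X}
      ⊆ Set.range (fun X : Conf M k => wfUpdate w r X - w X) := by
    rintro c ⟨X, rfl⟩; exact ⟨X, rfl⟩
  exact ((Set.finite_range _).subset hsub).bddAbove

end Aux


/-- If `Φ` assigns a real number to every 1-Lipschitz work function such that
(1) `Φ(T_r(w)) - Φ(w) ≥ ∇(w, r)` for every 1-Lipschitz `w` and request `r`, and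
(2) `Φ(w) ≤ (c+1)·min_X w(X) + A` for some constant `A` and every 1-Lipschitz `w`,
then the Work Function Algorithm is `c`-competitive:
`WFA(ρ) ≤ c·OPT(ρ) + B` for some constant `B`, uniformly over initial configurations,
request sequences and WFA trajectories. -/
theorem wfa_competitive_of_potential {M : Type*} [Fintype M] [MetricSpace M] [Nonempty M]
    {k : ℕ} (hk : 0 < k) (c : ℝ) (hc : 0 ≤ c)
    (Φ : (Conf M k → ℝ) → ℝ)
    (h1 : ∀ w : Conf M k → ℝ, LipschitzWF w → ∀ r : M,
      Φ (wfUpdate w r) - Φ w ≥ extCost w r)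
    (h2 : ∃ A : ℝ, ∀ w : Conf M k → ℝ, LipschitzWF w →
      Φ w ≤ (c + 1) * sInf (Set.range w) + A) :
    ∃ B : ℝ, ∀ (X₀ : Conf M k) (ρ : List M) (Xs : ℕ → Conf M k),
      IsWFATrajectory X₀ ρ Xs → WFACost ρ Xs ≤ c * OPTCost X₀ ρ + B := by
  classical
  obtain ⟨A, hA⟩ := h2
  have hfin : Finite M := Finite.of_fintype M
  set m := sInf (Set.range fun X₀ : Conf M k => Φ (initWF X₀)) with hm
  refine ⟨A - m, ?_⟩
  rintro X₀ ρ Xs ⟨h0, hstep⟩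
  set t := ρ.length with ht
  have hlip : ∀ i, LipschitzWF (wfAt X₀ ρ i) := wfAt_lipschitz hk X₀ ρ
  have hsucc : ∀ i : Fin t, wfAt X₀ ρ (↑i + 1) = wfUpdate (wfAt X₀ ρ ↑i) (ρ.get i) :=
    fun i => wfAt_succ X₀ ρ i.isLt
  -- step identity
  have hstepEq : ∀ i : Fin t, confDist (Xs ↑i) (Xs (↑i + 1)) =
      wfAt X₀ ρ (↑i + 1) (Xs ↑i) - wfAt X₀ ρ (↑i + 1) (Xs (↑i + 1)) := by
    intro i
    obtain ⟨hmem, heq⟩ := hstep i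
    set r := ρ.get i with hr
    have hSet : { c : ℝ | ∃ Y : Conf M k, r ∈ Y ∧
        c = wfAt X₀ ρ (↑i + 1) Y + confDist (Xs ↑i) Y }
        = updSet (wfAt X₀ ρ (↑i + 1)) r (Xs ↑i) := rfl
    rw [hSet] at heq
    have hS : sInf (updSet (wfAt X₀ ρ (↑i + 1)) r (Xs ↑i)) = wfAt X₀ ρ (↑i + 1) (Xs ↑i) := by
      apply le_antisymm
      · obtain ⟨Y₀, hY₀, hEq0⟩ := wfUpdate_mem hk (wfAt X₀ ρ ↑i) r (Xs ↑i)
        have h1' : wfAt X₀ ρ (↑i + 1) Y₀ ≤ wfAt X₀ ρ ↑i Y₀ := by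
          rw [hsucc i, ← hr]
          have := wfUpdate_le (w := wfAt X₀ ρ ↑i) (X := Y₀) hY₀
          rw [confDist_self] at this
          linarith
        have h2' : wfAt X₀ ρ (↑i + 1) (Xs ↑i) = wfAt X₀ ρ ↑i Y₀ + confDist (Xs ↑i) Y₀ := by
          rw [hsucc i, ← hr, hEq0]
        have h3' : wfAt X₀ ρ (↑i + 1) Y₀ + confDist (Xs ↑i) Y₀ ≤ wfAt X₀ ρ (↑i + 1) (Xs ↑i) := by
          linarith
        exact le_trans (csInf_le (updSet_finite _ _ _).bddBelow ⟨Y₀, hY₀, rfl⟩) h3'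
      · refine le_csInf (updSet_nonempty hk _ _ _) ?_
        rintro c ⟨Y, -, rfl⟩
        have := abs_le.mp (hlip (↑i + 1) (Xs ↑i) Y)
        linarith [this.2]
    rw [hS] at heq
    linarith
  -- telescoping
  set g : ℕ → ℝ := fun i => wfAt X₀ ρ i (Xs i) with hg
  set F : ℕ → ℝ := fun i => Φ (wfAt X₀ ρ i) with hF
  have hWFA : WFACost ρ Xs =
      (∑ i ∈ Finset.range t, (wfAt X₀ ρ (i + 1) (Xs i) - wfAt X₀ ρ i (Xs i)))
      + ∑ i ∈ Finset.range t, (g i - g (i + 1)) := by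
    rw [WFACost, ← Finset.sum_add_distrib, ← Fin.sum_univ_eq_sum_range]
    refine Finset.sum_congr rfl fun i _ => ?_
    rw [hstepEq i]
    simp only [hg]
    ring
  have htel2 : ∑ i ∈ Finset.range t, (g i - g (i + 1)) = g 0 - g t :=
    Finset.sum_range_sub' g t
  have hg0 : g 0 = 0 := by
    simp only [hg, h0]
    show initWF X₀ X₀ = 0
    exact confDist_self X₀
  have hsum1 : (∑ i ∈ Finset.range t, (wfAt X₀ ρ (i + 1) (Xs i) - wfAt X₀ ρ i (Xs i)))
      ≤ ∑ i ∈ Finset.range t, (F (i + 1) - F i) := by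
    refine Finset.sum_le_sum fun i hi => ?_
    have hilt : i < t := Finset.mem_range.mp hi
    have hs := wfAt_succ X₀ ρ hilt
    have hec : wfAt X₀ ρ (i + 1) (Xs i) - wfAt X₀ ρ i (Xs i)
        ≤ extCost (wfAt X₀ ρ i) (ρ.get ⟨i, hilt⟩) := by
      rw [hs]
      exact le_extCost _ _ _
    refine hec.trans ?_
    have := h1 (wfAt X₀ ρ i) (hlip i) (ρ.get ⟨i, hilt⟩)
    simp only [hF, hs]
    linarith
  have htel1 : ∑ i ∈ Finset.range t, (F (i + 1) - F i) = F t - F 0 :=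
    Finset.sum_range_sub F t
  -- final bounds
  have hOPT : OPTCost X₀ ρ ≤ g t :=
    csInf_le (Set.finite_range _).bddBelow ⟨Xs t, rfl⟩
  have hFt : F t ≤ (c + 1) * OPTCost X₀ ρ + A := hA _ (hlip t)
  have hF0 : m ≤ F 0 := csInf_le (Set.finite_range _).bddBelow ⟨X₀, rfl⟩
  calc WFACost ρ Xs
      ≤ (F t - F 0) + (g 0 - g t) := by rw [hWFA, htel2]; linarith
    _ ≤ c * OPTCost X₀ ρ + (A - m) := by rw [hg0]; linarith
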